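/- Let Λ ⊆ ℝⁿ be a bounded measurable set, V ∈ L¹(Λ,ℝ), and (J_d)_{d∈ℕ} a sequence in L¹(Λ,ℝ) such that J_d(x) ≤ V(x) for all x ∈ Λ and all d, and ‖V − J_d‖_{L¹(Λ)} → 0 as d → ∞. Then for every γ ∈ ℝ, the measure of the symmetric difference of the sublevel sets {x ∈ Λ : V(x) ≤ γ} and {x ∈ Λ : J_d(x) ≤ γ} converges to 0 as d → ∞. -/

import Mathlib

open MeasureTheory Set Filter
open scoped ENNReal Topology

/-- If `J_d ≤ V` on a bounded measurable set `Λ` and `‖V - J_d‖_{L¹(Λ)} → 0`,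
then for every `γ` the measure of the symmetric difference of the sublevel sets
`{x ∈ Λ : V x ≤ γ}` and `{x ∈ Λ : J_d x ≤ γ}` tends to `0`. -/
theorem sublevel_sets_converge_of_L1_convergence (n : ℕ)
    (Λ : Set (Fin n → ℝ)) (hΛmeas : MeasurableSet Λ)
    (hΛbdd : Bornology.IsBounded Λ)
    (V : (Fin n → ℝ) → ℝ) (J : ℕ → (Fin n → ℝ) → ℝ)
    (hVmeas : Measurable V) (hJmeas : ∀ d, Measurable (J d))
    (hVint : IntegrableOn V Λ) (hJint : ∀ d, IntegrableOn (J d) Λ)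
    (hle : ∀ d, ∀ x ∈ Λ, J d x ≤ V x)
    (hconv : Tendsto (fun d => ∫ x in Λ, |V x - J d x|) atTop (𝓝 0)) :
    ∀ γ : ℝ,
      Tendsto
        (fun d =>
          volume (({x ∈ Λ | V x ≤ γ} \ {x ∈ Λ | J d x ≤ γ}) ∪
                  ({x ∈ Λ | J d x ≤ γ} \ {x ∈ Λ | V x ≤ γ})))
        atTop (𝓝 0) := by
  intro γ
  have hΛfin : volume Λ < ⊤ := hΛbdd.measure_lt_top
  rw [ENNReal.tendsto_nhds_zero]
  intro ε hε
  rcases eq_top_or_lt_top ε with rfl | hεtop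
  · exact Eventually.of_forall fun d => le_top
  -- the shrinking bands
  set B : ℕ → Set (Fin n → ℝ) :=
    fun k => {x ∈ Λ | γ < V x ∧ V x ≤ γ + 1 / (k + 1)} with hBdef
  have hBmeas : ∀ k, MeasurableSet (B k) := by
    intro k
    exact hΛmeas.inter ((measurableSet_lt measurable_const hVmeas).inter
      (measurableSet_le hVmeas measurable_const))
  have hBanti : Antitone B := by
    intro k m hkm x hx
    obtain ⟨h1, h2, h3⟩ := hx
    have hdiv : 1 / ((m : ℝ) + 1) ≤ 1 / ((k : ℝ) + 1) :=
      one_div_le_one_div_of_le (by positivity) (by exact_mod_cast Nat.succ_le_succ hkm)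
    exact ⟨h1, h2, h3.trans (by linarith)⟩
  have hBempty : ⋂ k, B k = ∅ := by
    ext x
    simp only [mem_iInter, mem_empty_iff_false, iff_false]
    intro hx
    obtain ⟨k, hk⟩ := exists_nat_one_div_lt (sub_pos.mpr (hx 0).2.1)
    have := (hx k).2.2
    have : V x ≤ γ + 1 / (k + 1) := this
    linarith [hk]
  have htend : Tendsto (fun k => volume (B k)) atTop (𝓝 0) := by
    have h := tendsto_measure_iInter_atTop (μ := volume)
      (fun k => (hBmeas k).nullMeasurableSet) hBanti
      ⟨0, ((measure_mono (fun x hx => hx.1)).trans_lt hΛfin).ne⟩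
    rwa [hBempty, measure_empty] at h
  have hε2 : (0 : ℝ≥0∞) < ε / 2 := ENNReal.div_pos hε.ne' (by norm_num)
  obtain ⟨k, hk⟩ : ∃ k, volume (B k) ≤ ε / 2 :=
    ((ENNReal.tendsto_nhds_zero.mp htend) (ε / 2) hε2).exists
  set δ : ℝ := 1 / (k + 1) with hδdef
  have hδpos : 0 < δ := by positivity
  have hε2top : ε / 2 ≠ ⊤ := by
    exact (ENNReal.div_lt_top hεtop.ne (by norm_num)).ne
  have hε2real : 0 < (ε / 2).toReal := ENNReal.toReal_pos hε2.ne' hε2top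
  have hev : ∀ᶠ d in atTop, ∫ x in Λ, |V x - J d x| < δ * (ε / 2).toReal :=
    hconv.eventually (gt_mem_nhds (by positivity))
  filter_upwards [hev] with d hd
  -- notation
  set g : (Fin n → ℝ) → ℝ := fun x => V x - J d x with hgdef
  have hg0 : ∀ x ∈ Λ, 0 ≤ g x := fun x hx => sub_nonneg.mpr (hle d x hx)
  have hgint : IntegrableOn g Λ := hVint.sub (hJint d)
  have hgmeas : Measurable g := hVmeas.sub (hJmeas d)
  have h1 : ∫ x in Λ, |V x - J d x| = ∫ x in Λ, g x :=
    setIntegral_congr_fun hΛmeas (fun x hx => abs_of_nonneg (hg0 x hx))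
  have h2 : ∫⁻ x in Λ, ENNReal.ofReal (g x) = ENNReal.ofReal (∫ x in Λ, g x) :=
    (ofReal_integral_eq_lintegral_ofReal hgint
      (ae_restrict_of_forall_mem hΛmeas hg0)).symm
  -- Markov's inequality
  set C : Set (Fin n → ℝ) := {x ∈ Λ | δ < g x} with hCdef
  have hCsub : C ⊆ {x | ENNReal.ofReal δ ≤ ENNReal.ofReal (g x)} ∩ Λ :=
    fun x hx => ⟨ENNReal.ofReal_le_ofReal hx.2.le, hx.1⟩
  have hmarkov : volume C ≤ ε / 2 := by
    have h3 : volume.restrict Λ {x | ENNReal.ofReal δ ≤ ENNReal.ofReal (g x)} ≤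
        (∫⁻ x in Λ, ENNReal.ofReal (g x)) / ENNReal.ofReal δ :=
      meas_ge_le_lintegral_div (hgmeas.ennreal_ofReal).aemeasurable
        (ENNReal.ofReal_pos.mpr hδpos).ne' ENNReal.ofReal_ne_top
    have h4 : volume C ≤ (∫⁻ x in Λ, ENNReal.ofReal (g x)) / ENNReal.ofReal δ := by
      calc volume C ≤ volume ({x | ENNReal.ofReal δ ≤ ENNReal.ofReal (g x)} ∩ Λ) :=
            measure_mono hCsub
        _ = volume.restrict Λ {x | ENNReal.ofReal δ ≤ ENNReal.ofReal (g x)} :=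
            (Measure.restrict_apply' hΛmeas).symm
        _ ≤ _ := h3
    have h5 : (∫⁻ x in Λ, ENNReal.ofReal (g x)) ≤ ENNReal.ofReal δ * (ε / 2) := by
      rw [h2]
      calc ENNReal.ofReal (∫ x in Λ, g x)
          ≤ ENNReal.ofReal (δ * (ε / 2).toReal) :=
            ENNReal.ofReal_le_ofReal (by rw [← h1]; exact hd.le)
        _ = ENNReal.ofReal δ * ENNReal.ofReal ((ε / 2).toReal) :=
            ENNReal.ofReal_mul hδpos.le
        _ = ENNReal.ofReal δ * (ε / 2) := by rw [ENNReal.ofReal_toReal hε2top]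
    calc volume C ≤ (∫⁻ x in Λ, ENNReal.ofReal (g x)) / ENNReal.ofReal δ := h4
      _ ≤ (ENNReal.ofReal δ * (ε / 2)) / ENNReal.ofReal δ :=
          ENNReal.div_le_div_right h5 _
      _ = ε / 2 := by
          rw [mul_div_assoc]
          exact ENNReal.mul_div_cancel
            (ENNReal.ofReal_pos.mpr hδpos).ne' ENNReal.ofReal_ne_top
  -- the symmetric difference is contained in `B k ∪ C`
  have hsub : ({x ∈ Λ | V x ≤ γ} \ {x ∈ Λ | J d x ≤ γ}) ∪
      ({x ∈ Λ | J d x ≤ γ} \ {x ∈ Λ | V x ≤ γ}) ⊆ B k ∪ C := by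
    rintro x (⟨⟨hxΛ, hV⟩, hnot⟩ | ⟨⟨hxΛ, hJ⟩, hnot⟩)
    · exact absurd ⟨hxΛ, (hle d x hxΛ).trans hV⟩ hnot
    · have hVx : γ < V x := by
        by_contra h
        exact hnot ⟨hxΛ, not_lt.mp h⟩
      by_cases hcase : V x ≤ γ + δ
      · exact Or.inl ⟨hxΛ, hVx, hcase⟩
      · refine Or.inr ⟨hxΛ, ?_⟩
        have : γ + δ < V x := not_le.mp hcase
        simp only [hgdef]; linarith
  calc volume _ ≤ volume (B k ∪ C) := measure_mono hsub
    _ ≤ volume (B k) + volume C := measure_union_le _ _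
    _ ≤ ε / 2 + ε / 2 := add_le_add hk hmarkov
    _ = ε := ENNReal.add_halves ε
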